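/- For every n ≥ 1, the map assigning to each sequence of choices (F⁽ⁿ⁾, …, F⁽¹⁾), with F⁽ᵏ⁾ ∈ {S⁽ᵏ⁾, A⁽ᵏ⁾}, the product vector F⁽ⁿ⁾F⁽ⁿ⁻¹⁾⋯F⁽¹⁾ is injective; consequently the set SA(n) has exactly 2^n elements. -/

import Mathlib

noncomputable def Smat (k : ℕ) : Matrix (Fin (2 ^ (k + 1))) (Fin (2 ^ k)) ℝ :=
  Matrix.of fun i j =>
    if (i : ℕ) < 2 ^ k then (if (i : ℕ) = (j : ℕ) then 1 else 0)
    else (if (i : ℕ) + (j : ℕ) = 2 ^ (k + 1) - 1 then 1 else 0)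

noncomputable def Amat (k : ℕ) : Matrix (Fin (2 ^ (k + 1))) (Fin (2 ^ k)) ℝ :=
  Matrix.of fun i j =>
    if (i : ℕ) < 2 ^ k then (if (i : ℕ) = (j : ℕ) then -1 else 0)
    else (if (i : ℕ) + (j : ℕ) = 2 ^ (k + 1) - 1 then 1 else 0)

noncomputable def Fmat (b : Bool) (k : ℕ) : Matrix (Fin (2 ^ (k + 1))) (Fin (2 ^ k)) ℝ :=
  if b then Amat k else Smat k

noncomputable def prodVec : (n : ℕ) → (Fin n → Bool) → (Fin (2 ^ n) → ℝ)
  | 0, _ => fun _ => 1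
  | n + 1, c => (Fmat (c (Fin.last n)) n).mulVec (prodVec n fun i => c i.castSucc)

def SA (n : ℕ) : Set (Fin (2 ^ n) → ℝ) := { v | ∃ c : Fin n → Bool, v = prodVec n c }

lemma Fmat_apply (b : Bool) (k : ℕ) (i : Fin (2 ^ (k+1))) (j : Fin (2 ^ k)) :
    Fmat b k i j =
      if (i : ℕ) < 2 ^ k then (if (i : ℕ) = (j : ℕ) then (if b then -1 else 1) else 0)
      else (if (i : ℕ) + (j : ℕ) = 2 ^ (k + 1) - 1 then 1 else 0) := by
  cases b <;> simp [Fmat, Smat, Amat]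

lemma mulVec_zero (b : Bool) (n : ℕ) (v : Fin (2 ^ n) → ℝ) :
    (Fmat b n).mulVec v ⟨0, Nat.pow_pos (by norm_num)⟩ =
      (if b then -1 else 1) * v ⟨0, Nat.pow_pos (by norm_num)⟩ := by
  rw [Matrix.mulVec, dotProduct]
  rw [Finset.sum_eq_single (⟨0, Nat.pow_pos (by norm_num)⟩ : Fin (2 ^ n))]
  · rw [Fmat_apply]
    simp [Nat.pow_pos]
  · intro j _ hj
    rw [Fmat_apply]
    have : (0 : ℕ) ≠ (j : ℕ) := by
      intro h; apply hj; exact Fin.ext h.symm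
    simp [Nat.pow_pos, this]
  · simp

lemma mulVec_bottom (b : Bool) (n : ℕ) (v : Fin (2 ^ n) → ℝ) (j : Fin (2 ^ n)) :
    (Fmat b n).mulVec v ⟨2 ^ (n+1) - 1 - (j : ℕ), by
      have := j.isLt; have h2 : 2 ^ (n+1) = 2 * 2 ^ n := by ring
      omega⟩ = v j := by
  have hj := j.isLt
  have h2 : 2 ^ (n+1) = 2 * 2 ^ n := by ring
  rw [Matrix.mulVec, dotProduct]
  rw [Finset.sum_eq_single j]
  · rw [Fmat_apply]
    have h1 : ¬ (2 ^ (n+1) - 1 - (j : ℕ) < 2 ^ n) := by omega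
    have h3 : 2 ^ (n+1) - 1 - (j : ℕ) + (j : ℕ) = 2 ^ (n+1) - 1 := by omega
    simp [h1, h3]
  · intro j' _ hj'
    rw [Fmat_apply]
    have hj'2 := j'.isLt
    have h1 : ¬ (2 ^ (n+1) - 1 - (j : ℕ) < 2 ^ n) := by omega
    have h3 : ¬ (2 ^ (n+1) - 1 - (j : ℕ) + (j' : ℕ) = 2 ^ (n+1) - 1) := by
      intro h; apply hj'; apply Fin.ext; omega
    simp [h1, h3]
  · simp

lemma prodVec_zero_ne (n : ℕ) (c : Fin n → Bool) :
    prodVec n c ⟨0, Nat.pow_pos (by norm_num)⟩ ≠ 0 := by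
  induction n with
  | zero => simp [prodVec]
  | succ n ih =>
    rw [prodVec, mulVec_zero]
    refine mul_ne_zero ?_ (ih _)
    cases c (Fin.last n) <;> norm_num

lemma prodVec_injective : ∀ n, Function.Injective (prodVec n)
  | 0 => fun c c' _ => Subsingleton.elim _ _
  | n + 1 => by
    intro c c' h
    simp only [prodVec] at h
    have hv : prodVec n (fun i => c i.castSucc) = prodVec n (fun i => c' i.castSucc) := by
      funext j
      have := congrFun h ⟨2 ^ (n+1) - 1 - (j : ℕ), by
        have h1 : 0 < 2 ^ (n+1) := Nat.pow_pos (by norm_num); omega⟩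
      rwa [mulVec_bottom, mulVec_bottom] at this
    have htail := prodVec_injective n hv
    have hb : c (Fin.last n) = c' (Fin.last n) := by
      have h0 := congrFun h ⟨0, Nat.pow_pos (by norm_num)⟩
      rw [mulVec_zero, mulVec_zero, hv] at h0
      have hne := prodVec_zero_ne n (fun i => c' i.castSucc)
      have := mul_right_cancel₀ hne h0
      cases hc : c (Fin.last n) <;> cases hc' : c' (Fin.last n) <;>
        simp [hc, hc'] at this ⊢ <;> norm_num at this
    funext i
    induction i using Fin.lastCases with
    | last => exact hb
    | cast i => exact congrFun htail i

theorem stmt8 (n : ℕ) (hn : 1 ≤ n) :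
    Function.Injective (prodVec n) ∧ (SA n).ncard = 2 ^ n := by
  refine ⟨prodVec_injective n, ?_⟩
  have hSA : SA n = Set.range (prodVec n) := by
    ext v; exact ⟨fun ⟨c, hc⟩ => ⟨c, hc.symm⟩, fun ⟨c, hc⟩ => ⟨c, hc.symm⟩⟩
  rw [hSA, ← Nat.card_coe_set_eq, Nat.card_range_of_injective (prodVec_injective n)]
  simp [Nat.card_eq_fintype_card]
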